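/- Let X, Y be Hilbert spaces, A, E ∈ B(X,Y), Ā = A + E, and T, T' ⊆ X, S, S' ⊆ Y closed subspaces such that G = A_{T,S}^{(2)} exists, max{δ̂(T,T'), δ̂(S,S')} < 1/(1 + ‖A‖·‖G‖)², and ‖G‖·‖E‖ < 1/(1 + ‖G‖·‖A‖). Then ‖Ā_{T',S'}^{(2)} − G‖ ≤ ‖G‖²·(‖E‖ + ((1+√5)/2)·‖A‖·(δ̂(T,T') + δ̂(S,S'))) / (1 − ‖G‖·(‖E‖ + ‖A‖·(δ̂(T,T') + δ̂(S,S')))). -/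

import Mathlib

noncomputable section
set_option maxHeartbeats 0
set_option linter.unusedSectionVars false
set_option linter.unusedVariables false

open ContinuousLinearMap

/-- δ(M,N) = sup{dist(x,N) : x ∈ M, ‖x‖ = 1}, with sSup ∅ = 0 covering M = {0}. -/
def gapDelta {H : Type*} [NormedAddCommGroup H] (M N : Set H) : ℝ :=
  sSup ((fun x => Metric.infDist x N) '' {x | x ∈ M ∧ ‖x‖ = 1})

/-- The gap δ̂(M,N) = max{δ(M,N), δ(N,M)}. -/
def gapHat {H : Type*} [NormedAddCommGroup H] (M N : Set H) : ℝ :=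
  max (gapDelta M N) (gapDelta N M)

/-- Orthogonal projection onto a closed subspace, as an operator H →L[ℂ] H. -/
def projCLM {H : Type*} [NormedAddCommGroup H] [InnerProductSpace ℂ H] [CompleteSpace H]
    (K : Submodule ℂ H) (hK : IsClosed (K : Set H)) : H →L[ℂ] H :=
  haveI := hK.completeSpace_coe
  K.subtypeL.comp K.orthogonalProjectionOnto

/-- G is the outer inverse A_{T,S}^{(2)}: GAG = G, R(G) = T, N(G) = S. -/
def IsOuterInv {X Y : Type*} [NormedAddCommGroup X] [NormedSpace ℂ X]
    [NormedAddCommGroup Y] [NormedSpace ℂ Y]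
    (A : X →L[ℂ] Y) (T : Submodule ℂ X) (S : Submodule ℂ Y) (G : Y →L[ℂ] X) : Prop :=
  G ∘L (A ∘L G) = G ∧ LinearMap.range (G : Y →ₗ[ℂ] X) = T ∧ LinearMap.ker (G : Y →ₗ[ℂ] X) = S

/-- B is the Moore–Penrose inverse of A. -/
def IsMPInv {X Y : Type*} [NormedAddCommGroup X] [InnerProductSpace ℂ X] [CompleteSpace X]
    [NormedAddCommGroup Y] [InnerProductSpace ℂ Y] [CompleteSpace Y]
    (A : X →L[ℂ] Y) (B : Y →L[ℂ] X) : Prop :=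
  A ∘L (B ∘L A) = A ∧ B ∘L (A ∘L B) = B ∧
  adjoint (A ∘L B) = A ∘L B ∧ adjoint (B ∘L A) = B ∘L A

section helpers
variable {H : Type*} [NormedAddCommGroup H] [InnerProductSpace ℂ H] [CompleteSpace H]

lemma projCLM_mem (K : Submodule ℂ H) (hK : IsClosed (K : Set H)) (x : H) :
    projCLM K hK x ∈ K := by
  haveI := hK.completeSpace_coe
  exact (K.orthogonalProjectionOnto x).2

lemma projCLM_eq_self (K : Submodule ℂ H) (hK : IsClosed (K : Set H)) {x : H} (hx : x ∈ K) :
    projCLM K hK x = x := by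
  haveI := hK.completeSpace_coe
  exact K.starProjection_eq_self_iff.mpr hx

lemma sub_projCLM_mem_orthogonal (K : Submodule ℂ H) (hK : IsClosed (K : Set H)) (x : H) :
    x - projCLM K hK x ∈ Kᗮ := by
  haveI := hK.completeSpace_coe
  exact K.sub_starProjection_mem_orthogonal x

lemma norm_sub_projCLM_le (K : Submodule ℂ H) (hK : IsClosed (K : Set H)) (x : H)
    {w : H} (hw : w ∈ K) : ‖x - projCLM K hK x‖ ≤ ‖x - w‖ := by
  have horth : x - projCLM K hK x ∈ Kᗮ := sub_projCLM_mem_orthogonal K hK x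
  have hPw : projCLM K hK x - w ∈ K := K.sub_mem (projCLM_mem K hK x) hw
  have hinner : (inner ℂ (x - projCLM K hK x) (projCLM K hK x - w)) = 0 := by
    have := (Submodule.mem_orthogonal' K _).mp horth
    exact this _ hPw
  have hdecomp : x - w = (x - projCLM K hK x) + (projCLM K hK x - w) := by abel
  have hsq : ‖x - w‖ ^ 2 = ‖x - projCLM K hK x‖ ^ 2 + ‖projCLM K hK x - w‖ ^ 2 := by
    rw [hdecomp]
    have := norm_add_sq_eq_norm_sq_add_norm_sq_of_inner_eq_zero _ _ hinner
    nlinarith [this]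
  nlinarith [norm_nonneg (x - w), norm_nonneg (x - projCLM K hK x),
    sq_nonneg ‖projCLM K hK x - w‖]

lemma infDist_eq_norm_sub_projCLM (K : Submodule ℂ H) (hK : IsClosed (K : Set H)) (x : H) :
    Metric.infDist x (K : Set H) = ‖x - projCLM K hK x‖ := by
  refine le_antisymm ?_ ?_
  · have := Metric.infDist_le_dist_of_mem (x := x) (projCLM_mem K hK x)
    rwa [dist_eq_norm] at this
  · rw [Metric.infDist_eq_iInf]
    haveI : Nonempty (K : Set H) := ⟨⟨0, K.zero_mem⟩⟩
    refine le_ciInf fun y => ?_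
    rw [dist_eq_norm]
    exact norm_sub_projCLM_le K hK x y.2

lemma pythag_projCLM (K : Submodule ℂ H) (hK : IsClosed (K : Set H)) (x : H) :
    ‖x‖ ^ 2 = ‖projCLM K hK x‖ ^ 2 + ‖x - projCLM K hK x‖ ^ 2 := by
  have horth : x - projCLM K hK x ∈ Kᗮ := sub_projCLM_mem_orthogonal K hK x
  have hinner : (inner ℂ (projCLM K hK x) (x - projCLM K hK x)) = 0 :=
    (Submodule.mem_orthogonal K _).mp horth _ (projCLM_mem K hK x)
  have hdecomp : x = projCLM K hK x + (x - projCLM K hK x) := by abel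
  calc ‖x‖ ^ 2 = ‖projCLM K hK x + (x - projCLM K hK x)‖ ^ 2 := by rw [← hdecomp]
    _ = _ := by
      have := norm_add_sq_eq_norm_sq_add_norm_sq_of_inner_eq_zero _ _ hinner
      nlinarith [this]

lemma gapDelta_nonneg (M N : Set H) : 0 ≤ gapDelta M N := by
  apply Real.sSup_nonneg
  rintro r ⟨x, _, rfl⟩
  exact Metric.infDist_nonneg

lemma gapDelta_bddAbove (M : Set H) (N : Submodule ℂ H) :
    BddAbove ((fun x => Metric.infDist x (N : Set H)) '' {x | x ∈ M ∧ ‖x‖ = 1}) := by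
  refine ⟨1, ?_⟩
  rintro r ⟨x, ⟨_, hx1⟩, rfl⟩
  have h0 : (0 : H) ∈ (N : Set H) := N.zero_mem
  calc Metric.infDist x (N : Set H) ≤ dist x 0 := Metric.infDist_le_dist_of_mem h0
    _ = ‖x‖ := by rw [dist_zero_right]
    _ = 1 := hx1

lemma le_gapDelta (M : Set H) (N : Submodule ℂ H) {u : H} (hu : u ∈ M) (h1 : ‖u‖ = 1) :
    Metric.infDist u (N : Set H) ≤ gapDelta M (N : Set H) :=
  le_csSup (gapDelta_bddAbove M N) ⟨u, ⟨hu, h1⟩, rfl⟩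

lemma norm_sub_projCLM_le_gapDelta (M N : Submodule ℂ H) (hN : IsClosed (N : Set H))
    {m : H} (hm : m ∈ M) :
    ‖m - projCLM N hN m‖ ≤ gapDelta (M : Set H) (N : Set H) * ‖m‖ := by
  rcases eq_or_ne m 0 with rfl | hm0
  · simp [map_zero]
  · have hnm : (0:ℝ) < ‖m‖ := norm_pos_iff.mpr hm0
    set c : ℂ := (‖m‖ : ℂ)⁻¹ with hc
    have hcne : (‖m‖ : ℂ) ≠ 0 := by exact_mod_cast hnm.ne'
    set u := c • m with hu
    have hu1 : ‖u‖ = 1 := by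
      rw [hu, norm_smul, hc, norm_inv, Complex.norm_real, Real.norm_eq_abs,
        abs_of_pos hnm, inv_mul_cancel₀ hnm.ne']
    have huM : u ∈ M := M.smul_mem c hm
    have key : Metric.infDist u (N : Set H) ≤ gapDelta (M : Set H) (N : Set H) :=
      le_gapDelta _ _ huM hu1
    rw [infDist_eq_norm_sub_projCLM N hN] at key
    have hmu : m = (‖m‖ : ℂ) • u := by
      rw [hu, smul_smul, hc, mul_inv_cancel₀ hcne, one_smul]
    have : ‖m - projCLM N hN m‖ = ‖m‖ * ‖u - projCLM N hN u‖ := by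
      conv_lhs => rw [hmu, map_smul, ← smul_sub]
      rw [norm_smul, Complex.norm_real, Real.norm_eq_abs, abs_of_pos hnm]
    rw [this, mul_comm (gapDelta (M : Set H) (N : Set H)) ‖m‖]
    exact mul_le_mul_of_nonneg_left key hnm.le

end helpers

section idem

lemma sq_le_imp {a b : ℝ} (hb : 0 ≤ b) (h : a ^ 2 ≤ b ^ 2) : a ≤ b := by nlinarith

lemma projCLM_apply_norm_le {H : Type*} [NormedAddCommGroup H] [InnerProductSpace ℂ H]
    [CompleteSpace H] (K : Submodule ℂ H) (hK : IsClosed (K : Set H)) (x : H) :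
    ‖projCLM K hK x‖ ≤ ‖x‖ := by
  refine sq_le_imp (norm_nonneg x) ?_
  have := pythag_projCLM K hK x
  nlinarith [sq_nonneg ‖x - projCLM K hK x‖]

lemma quad_aux {l u ν ρ : ℝ} (hl : 0 ≤ l) (hu : 0 ≤ u) (hν : 0 ≤ ν) (hρ : 0 ≤ ρ)
    (tri : 1 ≤ l + u) :
    ν ^ 2 * ρ ^ 2 ≤ (l ^ 2 * ν ^ 2 + ρ ^ 2) * (u ^ 2 * ν ^ 2 + ρ ^ 2) := by
  have h1 : (0:ℝ) ≤ (l * u * ν ^ 2 - ρ ^ 2) ^ 2 := sq_nonneg _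
  have h2 : (0:ℝ) ≤ ((l + u) ^ 2 - 1) * (ν ^ 2 * ρ ^ 2) := by
    refine mul_nonneg ?_ (by positivity)
    nlinarith
  nlinarith [h1, h2]

variable {H : Type*} [NormedAddCommGroup H] [InnerProductSpace ℂ H] [CompleteSpace H]

lemma one_le_norm_of_idem (Q : H →L[ℂ] H) (h : Q ∘L Q = Q) (h0 : Q ≠ 0) : 1 ≤ ‖Q‖ := by
  have hy : ∃ y, Q y ≠ 0 := by
    by_contra hc
    push_neg at hc
    exact h0 (by ext y; simp [hc y])
  obtain ⟨y, hy⟩ := hy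
  have h1 : Q (Q y) = Q y := DFunLike.congr_fun h y
  have h2 : ‖Q (Q y)‖ ≤ ‖Q‖ * ‖Q y‖ := Q.le_opNorm _
  rw [h1] at h2
  have h3 : (0:ℝ) < ‖Q y‖ := norm_pos_iff.mpr hy
  nlinarith

/-- For a nonzero idempotent `Q` on a Hilbert space, `‖y - Q y‖ ≤ ‖Q‖ * ‖y‖`. -/
lemma idem_norm_sub_le (Q : H →L[ℂ] H) (h : Q ∘L Q = Q) (h0 : Q ≠ 0) (y : H) :
    ‖y - Q y‖ ≤ ‖Q‖ * ‖y‖ := by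
  have hQ1 : 1 ≤ ‖Q‖ := one_le_norm_of_idem Q h h0
  by_cases hn : y - Q y = 0
  · rw [hn, norm_zero]; positivity
  by_cases hm : Q y = 0
  · rw [hm, sub_zero]
    nlinarith [norm_nonneg y]
  set m := Q y with hmdef
  set n := y - Q y with hndef
  have hy : y = m + n := by rw [hmdef, hndef]; abel
  have hQn : Q n = 0 := by
    have h1 : Q (Q y) = Q y := DFunLike.congr_fun h y
    rw [hndef, map_sub, h1, sub_self]
  have hQm : Q m = m := by
    rw [hmdef]; exact DFunLike.congr_fun h y
  have hνpos : (0:ℝ) < ‖n‖ := norm_pos_iff.mpr hn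
  have hMpos : (0:ℝ) < ‖m‖ := norm_pos_iff.mpr hm
  set lam : ℂ := (inner ℂ n m) / ((‖n‖ : ℂ) ^ 2) with hlam
  set r : H := m - lam • n with hr
  have hn2 : ((‖n‖ : ℂ) ^ 2) ≠ 0 := pow_ne_zero 2 (by exact_mod_cast hνpos.ne')
  have hinner_nr : (inner ℂ n r) = 0 := by
    have hs : (inner ℂ n n) = (‖n‖ : ℂ) ^ 2 := inner_self_eq_norm_sq_to_K n
    rw [hr, inner_sub_right, inner_smul_right, hlam, hs]
    rw [div_mul_cancel₀ _ hn2, sub_self]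
  have hQr : Q r = m := by
    rw [hr, map_sub, map_smul, hQm, hQn, smul_zero, sub_zero]
  have fact1 : ‖m‖ ≤ ‖Q‖ * ‖r‖ := by
    rw [← hQr]; exact Q.le_opNorm r
  have hmdc : m = lam • n + r := by rw [hr]; abel
  have hmndc : m + n = (1 + lam) • n + r := by
    rw [hr, add_smul, one_smul]; abel
  have hin1 : (inner ℂ (lam • n) r) = 0 := by
    rw [inner_smul_left, hinner_nr, mul_zero]
  have hin2 : (inner ℂ ((1 + lam) • n) r) = 0 := by
    rw [inner_smul_left, hinner_nr, mul_zero]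
  have p1 : ‖m‖ ^ 2 = ‖lam‖ ^ 2 * ‖n‖ ^ 2 + ‖r‖ ^ 2 := by
    have := norm_add_sq_eq_norm_sq_add_norm_sq_of_inner_eq_zero _ _ hin1
    have hns : ‖lam • n‖ = ‖lam‖ * ‖n‖ := norm_smul _ _
    rw [← hmdc, hns] at this
    nlinarith [this]
  have p2 : ‖m + n‖ ^ 2 = ‖1 + lam‖ ^ 2 * ‖n‖ ^ 2 + ‖r‖ ^ 2 := by
    have := norm_add_sq_eq_norm_sq_add_norm_sq_of_inner_eq_zero _ _ hin2
    have hns : ‖(1 + lam) • n‖ = ‖1 + lam‖ * ‖n‖ := norm_smul _ _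
    rw [← hmndc, hns] at this
    nlinarith [this]
  have tri : 1 ≤ ‖lam‖ + ‖1 + lam‖ := by
    have h1 : ((1 + lam) - lam : ℂ) = 1 := by ring
    have h2 : ‖(1 + lam) - lam‖ ≤ ‖1 + lam‖ + ‖lam‖ := norm_sub_le _ _
    rw [h1, norm_one] at h2
    linarith
  have hl : (0:ℝ) ≤ ‖lam‖ := norm_nonneg _
  have hu : (0:ℝ) ≤ ‖1 + lam‖ := norm_nonneg _
  have hWnn : (0:ℝ) ≤ ‖m + n‖ := norm_nonneg _
  have hρnn : (0:ℝ) ≤ ‖r‖ := norm_nonneg _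
  have fact2 : ‖n‖ ^ 2 * ‖r‖ ^ 2 ≤ ‖m‖ ^ 2 * ‖m + n‖ ^ 2 := by
    rw [p1, p2]
    exact quad_aux hl hu hνpos.le hρnn tri
  have h5 : ‖n‖ * ‖r‖ ≤ ‖m‖ * ‖m + n‖ := by
    refine sq_le_imp (mul_nonneg hMpos.le hWnn) ?_
    calc (‖n‖ * ‖r‖) ^ 2 = ‖n‖ ^ 2 * ‖r‖ ^ 2 := by ring
      _ ≤ ‖m‖ ^ 2 * ‖m + n‖ ^ 2 := fact2
      _ = (‖m‖ * ‖m + n‖) ^ 2 := by ring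
  have h6 : ‖n‖ * ‖m‖ ≤ (‖Q‖ * ‖m + n‖) * ‖m‖ := by
    calc ‖n‖ * ‖m‖ ≤ ‖n‖ * (‖Q‖ * ‖r‖) := by
          exact mul_le_mul_of_nonneg_left fact1 hνpos.le
      _ = ‖Q‖ * (‖n‖ * ‖r‖) := by ring
      _ ≤ ‖Q‖ * (‖m‖ * ‖m + n‖) := by
          exact mul_le_mul_of_nonneg_left h5 (norm_nonneg Q)
      _ = (‖Q‖ * ‖m + n‖) * ‖m‖ := by ring
  have h7 : ‖n‖ ≤ ‖Q‖ * ‖m + n‖ := le_of_mul_le_mul_right h6 hMpos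
  calc ‖y - Q y‖ = ‖n‖ := rfl
    _ ≤ ‖Q‖ * ‖m + n‖ := h7
    _ = ‖Q‖ * ‖y‖ := by rw [← hy]

end idem

section units
variable {H : Type*} [NormedAddCommGroup H] [NormedSpace ℂ H] [CompleteSpace H]

lemma inv_norm_le_oneSub (t : H →L[ℂ] H) (h : ‖t‖ < 1) :
    ‖((Units.oneSub t h)⁻¹ : (H →L[ℂ] H)ˣ).val‖ ≤ (1 - ‖t‖)⁻¹ := by
  have h1 : (((Units.oneSub t h)⁻¹ : (H →L[ℂ] H)ˣ)).val = ∑' n : ℕ, t ^ n := rfl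
  rw [h1]
  have h2 := tsum_geometric_le_of_norm_lt_one t h
  have h3 : ‖(1 : H →L[ℂ] H)‖ ≤ 1 := by
    rw [ContinuousLinearMap.one_def]; exact ContinuousLinearMap.norm_id_le
  linarith

lemma surj_of_near_one (f : H →L[ℂ] H) (h : ‖1 - f‖ < 1) : Function.Surjective f := by
  set u := Units.oneSub (1 - f) h with hu
  have hval : (u : H →L[ℂ] H) = f := by
    rw [hu, Units.val_oneSub, sub_sub_cancel]
  intro z
  refine ⟨(↑u⁻¹ : H →L[ℂ] H) z, ?_⟩
  have hmul : ((u : H →L[ℂ] H) * (↑u⁻¹ : H →L[ℂ] H)) = 1 := u.mul_inv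
  calc f ((↑u⁻¹ : H →L[ℂ] H) z) = ((u : H →L[ℂ] H) * (↑u⁻¹ : H →L[ℂ] H)) z := by
        rw [hval]; rfl
    _ = z := by rw [hmul]; rfl

lemma surj_on_submodule (f : H →L[ℂ] H) (W : Submodule ℂ H) (hWc : IsClosed (W : Set H))
    (hmaps : ∀ w ∈ W, f w ∈ W) {r : ℝ} (hr0 : 0 ≤ r) (hr : r < 1)
    (hnear : ∀ w ∈ W, ‖f w - w‖ ≤ r * ‖w‖) :
    ∀ w ∈ W, ∃ v ∈ W, f v = w := by
  haveI : CompleteSpace W := hWc.completeSpace_coe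
  set g : W →L[ℂ] W :=
    ContinuousLinearMap.codRestrict (f.comp W.subtypeL) W (fun x => hmaps x x.2) with hg
  have hcoe : ∀ z : W, ((g z : H)) = f (z : H) := fun z => rfl
  have hnorm : ‖1 - g‖ < 1 := by
    have : ‖1 - g‖ ≤ r := by
      refine ContinuousLinearMap.opNorm_le_bound _ hr0 fun z => ?_
      have h1 : (((1 - g) z : W) : H) = (z : H) - f (z : H) := by
        push_cast [ContinuousLinearMap.sub_apply, ContinuousLinearMap.one_apply, hcoe]
        abel
      calc ‖(1 - g) z‖ = ‖(((1 - g) z : W) : H)‖ := rfl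
        _ = ‖f (z : H) - (z : H)‖ := by rw [h1, norm_sub_rev]
        _ ≤ r * ‖(z : H)‖ := hnear _ z.2
        _ = r * ‖z‖ := rfl
    linarith
  intro w hw
  obtain ⟨v, hv⟩ := surj_of_near_one g hnorm ⟨w, hw⟩
  exact ⟨(v : H), v.2, by rw [← hcoe, hv]⟩

end units

section numerics

lemma num_facts {c ge dT dS : ℝ} (hc : 1 ≤ c) (hdT0 : 0 ≤ dT) (hdS0 : 0 ≤ dS)
    (hge0 : 0 ≤ ge) (hdT2 : dT * (1 + c) ^ 2 < 1) (hdS2 : dS * (1 + c) ^ 2 < 1)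
    (hge2 : ge * (1 + c) < 1) :
    ge ≤ 1/2 ∧ dS * c < 1 ∧ c * (dT + dS) < 1/2 ∧ dT * c + dS * c < 1 ∧
      ge + c * (dT + dS) < 1 ∧ dS < 1 ∧ dT < 1 := by
  have h1 : dS * c < 1 := by nlinarith
  have h2 : ge ≤ 1/2 := by nlinarith
  have h3 : c * (dT + dS) < 1/2 := by nlinarith [sq_nonneg (1 - c), mul_nonneg hdT0 (sq_nonneg (1+c)), mul_nonneg hdS0 (sq_nonneg (1+c))]
  refine ⟨h2, h1, h3, by nlinarith, by nlinarith, by nlinarith, by nlinarith⟩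

end numerics

section numerics2

lemma num3 {c dT dS : ℝ} (n2 : dT * c + dS * c < 1) (hdTc0 : 0 ≤ dT * c)
    (h1 : 0 < 1 - dS * c) : dT * (c * (1 - dS * c)⁻¹) < 1 := by
  rw [show dT * (c * (1 - dS * c)⁻¹) = (dT * c) / (1 - dS * c) by ring, div_lt_one h1]
  linarith

lemma num_G'bound {c dT dS g : ℝ} (hg : 0 ≤ g) (h1 : 0 < 1 - dS * c)
    (h2 : 0 < 1 - dT * c - dS * c) :
    (1 - dT * (c * (1 - dS * c)⁻¹))⁻¹ * (g * (1 - dS * c)⁻¹)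
      ≤ g * (1 - dT * c - dS * c)⁻¹ := by
  have h3 : 1 - dT * (c * (1 - dS * c)⁻¹) = (1 - dT * c - dS * c) / (1 - dS * c) := by
    rw [eq_div_iff h1.ne']
    have := mul_inv_cancel₀ h1.ne'
    linear_combination (-(dT * c)) * this
  rw [h3]
  rw [show ((1 - dT * c - dS * c) / (1 - dS * c))⁻¹ = (1 - dS * c) / (1 - dT * c - dS * c) by
    rw [inv_div]]
  rw [show (1 - dS * c) / (1 - dT * c - dS * c) * (g * (1 - dS * c)⁻¹)
    = g * (1 - dT * c - dS * c)⁻¹ * ((1 - dS * c) * (1 - dS * c)⁻¹) by ring]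
  rw [mul_inv_cancel₀ h1.ne', mul_one]

end numerics2

section numerics3

lemma numC1 {ge dTc dSc : ℝ} (h : ge + dTc + dSc < 1) (hD : 0 < 1 - dTc - dSc) :
    ge * (1 - dTc - dSc)⁻¹ < 1 := by
  rw [show ge * (1 - dTc - dSc)⁻¹ = ge / (1 - dTc - dSc) by ring, div_lt_one hD]
  linarith

lemma numC2 {g ge dTc dSc : ℝ} (hg : 0 ≤ g) (hD : 0 < 1 - dTc - dSc)
    (hM : ge + dTc + dSc < 1) :
    (g * (1 - dTc - dSc)⁻¹) * (1 - ge * (1 - dTc - dSc)⁻¹)⁻¹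
      ≤ g * (1 - (ge + dTc + dSc))⁻¹ := by
  have h2 : 0 < 1 - (ge + dTc + dSc) := by linarith
  have h3 : 1 - ge * (1 - dTc - dSc)⁻¹ = (1 - (ge + dTc + dSc)) / (1 - dTc - dSc) := by
    field_simp
    ring
  rw [h3, inv_div]
  rw [show g * (1 - dTc - dSc)⁻¹ * ((1 - dTc - dSc) / (1 - (ge + dTc + dSc)))
    = g * (1 - (ge + dTc + dSc))⁻¹ * ((1 - dTc - dSc) * (1 - dTc - dSc)⁻¹) by ring]
  rw [mul_inv_cancel₀ hD.ne', mul_one]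

end numerics3

section golden

lemma golden_ineq {c ge dT dS : ℝ} (hc : 1 ≤ c) (hge0 : 0 ≤ ge) (hge12 : ge ≤ 1/2)
    (hdT0 : 0 ≤ dT) (hdS0 : 0 ≤ dS) :
    (dT * c + ge + dS * (c + ge)) ^ 2 + dT ^ 2
      ≤ (ge + (1 + Real.sqrt 5) / 2 * c * (dT + dS)) ^ 2 := by
  have h5 : Real.sqrt 5 ^ 2 = 5 := Real.sq_sqrt (by norm_num)
  have h5b : 2 ≤ Real.sqrt 5 := by nlinarith [Real.sqrt_nonneg 5]
  set φ : ℝ := (1 + Real.sqrt 5) / 2 with hφ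
  have hφ2 : φ ^ 2 = φ + 1 := by rw [hφ]; field_simp; nlinarith [h5]
  have hφ15 : (1.5:ℝ) ≤ φ := by rw [hφ]; linarith
  have hcdT : 0 ≤ c * dT := mul_nonneg (by linarith) hdT0
  have k1 : (φ - 1) * c * dT ≤ (ge + φ * c * (dT + dS)) - (dT * c + ge + dS * (c + ge)) := by
    have h1 : 0 ≤ ((φ - 1) * c - ge) * dS := by
      refine mul_nonneg ?_ hdS0
      nlinarith
    nlinarith
  have k2 : (φ + 1) * c * dT ≤ (ge + φ * c * (dT + dS)) + (dT * c + ge + dS * (c + ge)) := by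
    have h1 : 0 ≤ φ * c * dS := by nlinarith
    have h2 : 0 ≤ dS * (c + ge) := mul_nonneg hdS0 (by linarith)
    nlinarith
  have k3 : ((φ - 1) * c * dT) * ((φ + 1) * c * dT)
      ≤ ((ge + φ * c * (dT + dS)) - (dT * c + ge + dS * (c + ge)))
        * ((ge + φ * c * (dT + dS)) + (dT * c + ge + dS * (c + ge))) := by
    refine mul_le_mul k1 k2 ?_ ?_
    · nlinarith
    · refine le_trans ?_ k1
      nlinarith
  have k4 : ((φ - 1) * c * dT) * ((φ + 1) * c * dT) = φ * (c * dT) ^ 2 := by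
    nlinarith [hφ2]
  have h6 : dT ^ 2 ≤ φ * (c * dT) ^ 2 := by
    have h7 : 0 ≤ (c ^ 2 - 1) * dT ^ 2 := mul_nonneg (by nlinarith) (sq_nonneg dT)
    nlinarith [sq_nonneg dT]
  nlinarith [k3, k4, h6]

end golden

lemma final_eq {g a e dT dS : ℝ} :
    (g * e + (1 + Real.sqrt 5) / 2 * (a * g) * (dT + dS))
        * (g * (1 - (g * e + dT * (a * g) + dS * (a * g)))⁻¹)
      = g ^ 2 * (e + (1 + Real.sqrt 5) / 2 * a * (dT + dS))
        / (1 - g * (e + a * (dT + dS))) := by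
  rw [div_eq_mul_inv]
  have hden : 1 - g * (e + a * (dT + dS)) = 1 - (g * e + dT * (a * g) + dS * (a * g)) := by
    ring
  rw [hden]
  ring

variable {X Y : Type*} [NormedAddCommGroup X] [InnerProductSpace ℂ X] [CompleteSpace X]
  [NormedAddCommGroup Y] [InnerProductSpace ℂ Y] [CompleteSpace Y]
theorem stmt_17 (A E : X →L[ℂ] Y) (T T' : Submodule ℂ X) (S S' : Submodule ℂ Y)
    (hT : IsClosed (T : Set X)) (hT' : IsClosed (T' : Set X))
    (hS : IsClosed (S : Set Y)) (hS' : IsClosed (S' : Set Y))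
    (G : Y →L[ℂ] X) (hG : IsOuterInv A T S G)
    (hgap : max (gapHat (T : Set X) (T' : Set X)) (gapHat (S : Set Y) (S' : Set Y)) <
      1 / (1 + ‖A‖ * ‖G‖) ^ 2)
    (hE : ‖G‖ * ‖E‖ < 1 / (1 + ‖G‖ * ‖A‖)) :
    ∃ Gbar : Y →L[ℂ] X, IsOuterInv (A + E) T' S' Gbar ∧
      ‖Gbar - G‖ ≤ ‖G‖ ^ 2 * (‖E‖ + (1 + Real.sqrt 5) / 2 * ‖A‖ *
          (gapHat (T : Set X) (T' : Set X) + gapHat (S : Set Y) (S' : Set Y))) /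
        (1 - ‖G‖ * (‖E‖ + ‖A‖ * (gapHat (T : Set X) (T' : Set X) +
          gapHat (S : Set Y) (S' : Set Y)))) := by
  obtain ⟨hGAG, hranG, hkerG⟩ := hG
  by_cases hG0 : G = 0
  · -- degenerate case : G = 0, so T = ⊥, S = ⊤, and the gap condition forces T' = ⊥, S' = ⊤
    subst hG0
    have hnG : ‖(0 : Y →L[ℂ] X)‖ = 0 := norm_zero
    have hgap1 : max (gapHat (T : Set X) (T' : Set X)) (gapHat (S : Set Y) (S' : Set Y)) < 1 := by
      rw [hnG] at hgap
      simpa using hgap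
    have hTbot : ∀ x ∈ T, x = (0 : X) := by
      intro x hx
      rw [← hranG] at hx
      obtain ⟨y, rfl⟩ := hx
      rfl
    have hStop : ∀ y : Y, y ∈ S := by
      intro y
      rw [← hkerG]
      simp
    -- T' = ⊥
    have hT'bot : ∀ x ∈ T', x = (0 : X) := by
      intro x hx
      by_contra hxne
      have hnx : (0:ℝ) < ‖x‖ := norm_pos_iff.mpr hxne
      set u := ((‖x‖ : ℂ)⁻¹) • x with hu
      have hu1 : ‖u‖ = 1 := by
        rw [hu, norm_smul, norm_inv, Complex.norm_real, Real.norm_eq_abs, abs_of_pos hnx,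
          inv_mul_cancel₀ hnx.ne']
      have huT' : u ∈ T' := T'.smul_mem _ hx
      have hPu : projCLM T hT u = 0 := by
        have := projCLM_mem T hT u
        exact hTbot _ this
      have hinf : Metric.infDist u (T : Set X) = 1 := by
        rw [infDist_eq_norm_sub_projCLM T hT, hPu, sub_zero, hu1]
      have h1 : (1:ℝ) ≤ gapDelta (T' : Set X) (T : Set X) := by
        have := le_gapDelta (T' : Set X) T huT' hu1
        rw [hinf] at this; exact this
      have h2 : (1:ℝ) ≤ gapHat (T : Set X) (T' : Set X) := le_trans h1 (le_max_right _ _)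
      have := lt_of_le_of_lt (le_trans h2 (le_max_left _ _)) hgap1
      linarith
    -- S' = ⊤
    have hS'top : ∀ y : Y, y ∈ S' := by
      intro y
      by_contra hy
      set v := y - projCLM S' hS' y with hv
      have hvne : v ≠ 0 := by
        intro hc
        apply hy
        have : y = projCLM S' hS' y := by
          rw [hv] at hc; linear_combination (norm := module) hc
        rw [this]; exact projCLM_mem S' hS' y
      have hnv : (0:ℝ) < ‖v‖ := norm_pos_iff.mpr hvne
      set u := ((‖v‖ : ℂ)⁻¹) • v with hu
      have hu1 : ‖u‖ = 1 := by
        rw [hu, norm_smul, norm_inv, Complex.norm_real, Real.norm_eq_abs, abs_of_pos hnv,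
          inv_mul_cancel₀ hnv.ne']
      have hPv : projCLM S' hS' v = 0 := by
        rw [hv, map_sub, projCLM_eq_self S' hS' (projCLM_mem S' hS' y), sub_self]
      have hPu : projCLM S' hS' u = 0 := by
        rw [hu, map_smul, hPv, smul_zero]
      have hinf : Metric.infDist u (S' : Set Y) = 1 := by
        rw [infDist_eq_norm_sub_projCLM S' hS', hPu, sub_zero, hu1]
      have h1 : (1:ℝ) ≤ gapDelta (S : Set Y) (S' : Set Y) := by
        have := le_gapDelta (S : Set Y) S' (hStop u) hu1
        rw [hinf] at this; exact this
      have h2 : (1:ℝ) ≤ gapHat (S : Set Y) (S' : Set Y) := le_trans h1 (le_max_left _ _)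
      have := lt_of_le_of_lt (le_trans h2 (le_max_right _ _)) hgap1
      linarith
    refine ⟨0, ⟨by simp, ?_, ?_⟩, ?_⟩
    · apply le_antisymm
      · rintro x ⟨y, rfl⟩
        simpa using T'.zero_mem
      · intro x hx
        have := hT'bot x hx
        subst this
        exact Submodule.zero_mem _
    · apply le_antisymm
      · intro y _
        exact hS'top y
      · intro y _
        simp
    · rw [sub_zero, hnG]
      norm_num
  · -- main case: G ≠ 0
    have hg0 : (0:ℝ) < ‖G‖ := norm_pos_iff.mpr hG0
    have ha0 : (0:ℝ) ≤ ‖A‖ := norm_nonneg A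
    have he0 : (0:ℝ) ≤ ‖E‖ := norm_nonneg E
    set dT := gapHat (T : Set X) (T' : Set X) with hdTdef
    set dS := gapHat (S : Set Y) (S' : Set Y) with hdSdef
    have hGAGp : ∀ y, G (A (G y)) = G y := fun y => by
      simpa using DFunLike.congr_fun hGAG y
    have hc1 : 1 ≤ ‖A‖ * ‖G‖ := by
      have h2 : ‖A ∘L G‖ ≤ ‖A‖ * ‖G‖ := opNorm_comp_le _ _
      have h1 : ‖G‖ ≤ ‖G‖ * (‖A‖ * ‖G‖) := by
        calc ‖G‖ = ‖G ∘L (A ∘L G)‖ := by rw [hGAG]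
          _ ≤ ‖G‖ * ‖A ∘L G‖ := opNorm_comp_le _ _
          _ ≤ ‖G‖ * (‖A‖ * ‖G‖) := mul_le_mul_of_nonneg_left h2 (norm_nonneg G)
      have h3 : ‖G‖ * 1 ≤ ‖G‖ * (‖A‖ * ‖G‖) := by rw [mul_one]; exact h1
      exact le_of_mul_le_mul_left h3 hg0
    have hdT0 : 0 ≤ dT := le_trans (gapDelta_nonneg _ _) (le_max_left _ _)
    have hdS0 : 0 ≤ dS := le_trans (gapDelta_nonneg _ _) (le_max_left _ _)
    have hcpos : (0:ℝ) < 1 + ‖A‖ * ‖G‖ := by linarith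
    have hdT2 : dT * (1 + ‖A‖ * ‖G‖) ^ 2 < 1 := by
      have := lt_of_le_of_lt (le_max_left _ _) hgap
      rw [lt_div_iff₀ (by positivity)] at this
      linarith
    have hdS2 : dS * (1 + ‖A‖ * ‖G‖) ^ 2 < 1 := by
      have := lt_of_le_of_lt (le_max_right _ _) hgap
      rw [lt_div_iff₀ (by positivity)] at this
      linarith
    have hge2 : ‖G‖ * ‖E‖ * (1 + ‖A‖ * ‖G‖) < 1 := by
      rw [mul_comm ‖G‖ ‖A‖, lt_div_iff₀ (by linarith)] at hE
      linarith
    have hge0 : (0:ℝ) ≤ ‖G‖ * ‖E‖ := by positivity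
    obtain ⟨hge12, n1, n2', n2, n3, hdSlt1, hdTlt1⟩ :=
      num_facts hc1 hdT0 hdS0 hge0 hdT2 hdS2 hge2
    -- the idempotent Q0 = A G on Y, with kernel S
    set Q0 : Y →L[ℂ] Y := A ∘L G with hQ0def
    have hQ0p : ∀ y, Q0 y = A (G y) := fun y => rfl
    have hQ0idem : Q0 ∘L Q0 = Q0 := by
      ext y; simp only [ContinuousLinearMap.comp_apply, hQ0p, hGAGp]
    have hQ0ne : Q0 ≠ 0 := by
      intro hc
      apply hG0
      ext y
      have h1 := hGAGp y
      have h2 : A (G y) = 0 := by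
        have := DFunLike.congr_fun hc y
        simpa [hQ0p] using this
      rw [h2, map_zero] at h1
      simpa using h1.symm
    have hQ0norm : ‖Q0‖ ≤ ‖A‖ * ‖G‖ := opNorm_comp_le _ _
    have hSmem : ∀ y ∈ S, G y = 0 := by
      intro y hy
      rw [← hkerG] at hy
      exact hy
    have hkerS : ∀ y, G y = 0 → y ∈ S := by
      intro y hy
      rw [← hkerG]
      exact hy
    have hsubQ0 : ∀ y, y - Q0 y ∈ S := by
      intro y
      apply hkerS
      rw [map_sub, hQ0p, hGAGp, sub_self]
    -- Θ = 1 - (1 - Π')(1 - Q0) is invertible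
    set tS : Y →L[ℂ] Y := (1 - projCLM S' hS') ∘L (1 - Q0) with htSdef
    have htSnorm : ‖tS‖ ≤ dS * (‖A‖ * ‖G‖) := by
      refine ContinuousLinearMap.opNorm_le_bound _ (by positivity) fun y => ?_
      have h1 : tS y = (y - Q0 y) - projCLM S' hS' (y - Q0 y) := by
        simp only [htSdef, ContinuousLinearMap.comp_apply, ContinuousLinearMap.sub_apply,
          ContinuousLinearMap.one_apply, map_sub]
        abel
      rw [h1]
      have h2 : ‖(y - Q0 y) - projCLM S' hS' (y - Q0 y)‖
          ≤ gapDelta (S : Set Y) (S' : Set Y) * ‖y - Q0 y‖ :=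
        norm_sub_projCLM_le_gapDelta S S' hS' (hsubQ0 y)
      have h3 : gapDelta (S : Set Y) (S' : Set Y) ≤ dS := le_max_left _ _
      have h4 : ‖y - Q0 y‖ ≤ (‖A‖ * ‖G‖) * ‖y‖ := by
        calc ‖y - Q0 y‖ ≤ ‖Q0‖ * ‖y‖ := idem_norm_sub_le Q0 hQ0idem hQ0ne y
          _ ≤ (‖A‖ * ‖G‖) * ‖y‖ := mul_le_mul_of_nonneg_right hQ0norm (norm_nonneg y)
      calc ‖(y - Q0 y) - projCLM S' hS' (y - Q0 y)‖
          ≤ gapDelta (S : Set Y) (S' : Set Y) * ‖y - Q0 y‖ := h2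
        _ ≤ dS * ((‖A‖ * ‖G‖) * ‖y‖) :=
            mul_le_mul h3 h4 (norm_nonneg _) hdS0
        _ = dS * (‖A‖ * ‖G‖) * ‖y‖ := by ring
    have htSlt : ‖tS‖ < 1 := lt_of_le_of_lt htSnorm n1
    set uTh := Units.oneSub tS htSlt with huThdef
    set Th : Y →L[ℂ] Y := uTh.val with hThdef
    set Thinv : Y →L[ℂ] Y := (uTh⁻¹).val with hThinvdef
    have hThinvnorm : ‖Thinv‖ ≤ (1 - dS * (‖A‖ * ‖G‖))⁻¹ := by
      refine le_trans (inv_norm_le_oneSub tS htSlt) ?_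
      apply inv_anti₀
      · linarith
      · linarith
    have hThTh : ∀ y, Th (Thinv y) = y := by
      intro y
      have : (Th ∘L Thinv) = 1 := by
        rw [hThdef, hThinvdef]
        exact uTh.mul_inv
      calc Th (Thinv y) = (Th ∘L Thinv) y := rfl
        _ = y := by rw [this]; rfl
    have hThTh' : ∀ y, Thinv (Th y) = y := by
      intro y
      have : (Thinv ∘L Th) = 1 := by
        rw [hThdef, hThinvdef]
        exact uTh.inv_mul
      calc Thinv (Th y) = (Thinv ∘L Th) y := rfl
        _ = y := by rw [this]; rfl
    have hThp : ∀ y, Th y = y - tS y := by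
      intro y
      rw [hThdef, Units.val_oneSub]
      rfl
    -- Θ fixes AG-type vectors, and Θ s = Π' s for s ∈ S
    have hThQ0 : ∀ y, Thinv (A (G y)) = A (G y) := by
      intro y
      have h1 : tS (A (G y)) = 0 := by
        simp [htSdef, ContinuousLinearMap.comp_apply, ContinuousLinearMap.sub_apply,
          ContinuousLinearMap.one_apply, hQ0p, hGAGp]
      have h2 : Th (A (G y)) = A (G y) := by rw [hThp, h1, sub_zero]
      conv_lhs => rw [← h2]
      rw [hThTh']
    have hThS : ∀ s ∈ S, Th s = projCLM S' hS' s := by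
      intro s hs
      have hQ0s : Q0 s = 0 := by rw [hQ0p, hSmem s hs, map_zero]
      rw [hThp]
      simp [htSdef, ContinuousLinearMap.comp_apply, ContinuousLinearMap.sub_apply, hQ0s]
    set G1 : Y →L[ℂ] X := G ∘L Thinv with hG1def
    have hG1p : ∀ y, G1 y = G (Thinv y) := fun y => rfl
    have hG1outer : ∀ y, G1 (A (G1 y)) = G1 y := by
      intro y
      simp only [hG1p, hThQ0, hGAGp]
    have hG1ne : G1 ≠ 0 := by
      intro hc
      apply hG0
      ext y
      have : G1 (Th y) = 0 := by rw [hc]; rfl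
      rw [hG1p, hThTh'] at this
      simpa using this
    have hG1norm : ‖G1‖ ≤ ‖G‖ * (1 - dS * (‖A‖ * ‖G‖))⁻¹ := by
      calc ‖G1‖ ≤ ‖G‖ * ‖Thinv‖ := opNorm_comp_le _ _
        _ ≤ ‖G‖ * (1 - dS * (‖A‖ * ‖G‖))⁻¹ :=
            mul_le_mul_of_nonneg_left hThinvnorm (norm_nonneg G)
    -- kernel of G1 is S'
    have hkerG1 : ∀ y, G1 y = 0 ↔ y ∈ S' := by
      intro y
      constructor
      · intro hy
        rw [hG1p] at hy
        have hz : Thinv y ∈ S := hkerS _ hy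
        have : y = Th (Thinv y) := (hThTh y).symm
        rw [this, hThS _ hz]
        exact projCLM_mem _ _ _
      · intro hy
        -- surjectivity of Π' : S → S' gives y = Π' s for some s ∈ S
        have hrlt : dS < 1 := hdSlt1
        have hsurj : ∀ w ∈ S', ∃ v ∈ S', (projCLM S' hS' ∘L projCLM S hS) v = w := by
          refine surj_on_submodule _ S' hS' (fun w _ => projCLM_mem S' hS' _) hdS0 hrlt ?_
          intro w hw
          have h1 : (projCLM S' hS' ∘L projCLM S hS) w - w
              = projCLM S' hS' (projCLM S hS w - w) := by
            rw [map_sub, projCLM_eq_self S' hS' hw]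
            rfl
          rw [h1]
          calc ‖projCLM S' hS' (projCLM S hS w - w)‖ ≤ ‖projCLM S hS w - w‖ :=
                projCLM_apply_norm_le _ _ _
            _ = ‖w - projCLM S hS w‖ := norm_sub_rev _ _
            _ ≤ gapDelta (S' : Set Y) (S : Set Y) * ‖w‖ :=
                norm_sub_projCLM_le_gapDelta S' S hS hw
            _ ≤ dS * ‖w‖ :=
                mul_le_mul_of_nonneg_right (le_max_right _ _) (norm_nonneg w)
        obtain ⟨v, hvS', hfv⟩ := hsurj y hy
        have hsS : projCLM S hS v ∈ S := projCLM_mem _ _ _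
        have hy2 : y = Th (projCLM S hS v) := by
          rw [hThS _ hsS]
          exact hfv.symm
        rw [hG1p, hy2, hThTh', hSmem _ hsS]
    -- range of G1 is T
    have hranG1 : ∀ x, (∃ y, G1 y = x) ↔ x ∈ T := by
      intro x
      constructor
      · rintro ⟨y, rfl⟩
        rw [← hranG, hG1p]
        exact ⟨_, rfl⟩
      · intro hx
        rw [← hranG] at hx
        obtain ⟨z, rfl⟩ := hx
        exact ⟨Th z, by rw [hG1p, hThTh']; rfl⟩
    -- P1 = G1 ∘ A : idempotent on X with range T, fixing T
    set P1 : X →L[ℂ] X := G1 ∘L A with hP1def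
    have hP1p : ∀ x, P1 x = G1 (A x) := fun x => rfl
    have hP1idem : P1 ∘L P1 = P1 := by
      ext x
      simp only [ContinuousLinearMap.comp_apply, hP1p, hG1outer]
    have hP1ne : P1 ≠ 0 := by
      intro hc
      apply hG1ne
      ext y
      have h1 : G1 (A (G1 y)) = G1 y := hG1outer y
      have h2 : G1 (A (G1 y)) = 0 := by
        have := DFunLike.congr_fun hc (G1 y)
        simpa [hP1p] using this
      rw [h2] at h1
      simpa using h1.symm
    have hc0 : (0:ℝ) ≤ ‖A‖ * ‖G‖ := by positivity
    have hdTc0 : (0:ℝ) ≤ dT * (‖A‖ * ‖G‖) := mul_nonneg hdT0 hc0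
    have hdSc0 : (0:ℝ) ≤ dS * (‖A‖ * ‖G‖) := mul_nonneg hdS0 hc0
    have h1S : (0:ℝ) < 1 - dS * (‖A‖ * ‖G‖) := by linarith
    have hDTS : (0:ℝ) < 1 - dT * (‖A‖ * ‖G‖) - dS * (‖A‖ * ‖G‖) := by linarith
    have hP1norm : ‖P1‖ ≤ (‖A‖ * ‖G‖) * (1 - dS * (‖A‖ * ‖G‖))⁻¹ := by
      calc ‖P1‖ ≤ ‖G1‖ * ‖A‖ := opNorm_comp_le _ _
        _ ≤ (‖G‖ * (1 - dS * (‖A‖ * ‖G‖))⁻¹) * ‖A‖ :=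
            mul_le_mul_of_nonneg_right hG1norm ha0
        _ = (‖A‖ * ‖G‖) * (1 - dS * (‖A‖ * ‖G‖))⁻¹ := by ring
    have hP1fix : ∀ t ∈ T, P1 t = t := by
      intro t ht
      rw [← hranG] at ht
      obtain ⟨z, rfl⟩ := ht
      rw [hP1p, hG1p]; exact (congrArg G (hThQ0 z)).trans (hGAGp z)
    have hP1mem : ∀ x, P1 x ∈ T := fun x => (hranG1 (P1 x)).mp ⟨A x, rfl⟩
    -- Λ = 1 - (1 - P1) P'
    set tT : X →L[ℂ] X := (1 - P1) ∘L projCLM T' hT' with htTdef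
    have hdTP1 : dT * ‖P1‖ < 1 :=
      lt_of_le_of_lt (mul_le_mul_of_nonneg_left hP1norm hdT0)
        (num3 n2 hdTc0 h1S)
    have hdTP1' : dT * ‖P1‖ ≤ dT * ((‖A‖ * ‖G‖) * (1 - dS * (‖A‖ * ‖G‖))⁻¹) :=
      mul_le_mul_of_nonneg_left hP1norm hdT0
    have htTnorm : ‖tT‖ ≤ dT * ‖P1‖ := by
      refine ContinuousLinearMap.opNorm_le_bound _ (by positivity) fun x => ?_
      set px := projCLM T' hT' x with hpx
      have hpxT' : px ∈ T' := projCLM_mem _ _ _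
      set w := px - projCLM T hT px with hw
      have h1 : tT x = w - P1 w := by
        have hfix : P1 (projCLM T hT px) = projCLM T hT px := hP1fix _ (projCLM_mem _ _ _)
        simp only [htTdef, ContinuousLinearMap.comp_apply, ContinuousLinearMap.sub_apply,
          ContinuousLinearMap.one_apply, hw, map_sub, hfix, ← hpx]
        abel
      have h2 : ‖w‖ ≤ dT * ‖x‖ := by
        calc ‖w‖ ≤ gapDelta (T' : Set X) (T : Set X) * ‖px‖ :=
              norm_sub_projCLM_le_gapDelta T' T hT hpxT'
          _ ≤ dT * ‖x‖ :=
              mul_le_mul (le_max_right _ _) (projCLM_apply_norm_le _ _ _)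
                (norm_nonneg _) hdT0
      calc ‖tT x‖ = ‖w - P1 w‖ := by rw [h1]
        _ ≤ ‖P1‖ * ‖w‖ := idem_norm_sub_le P1 hP1idem hP1ne w
        _ ≤ ‖P1‖ * (dT * ‖x‖) := mul_le_mul_of_nonneg_left h2 (norm_nonneg _)
        _ = dT * ‖P1‖ * ‖x‖ := by ring
    have htTlt : ‖tT‖ < 1 := lt_of_le_of_lt htTnorm hdTP1
    set uLam := Units.oneSub tT htTlt with huLamdef
    set Lam : X →L[ℂ] X := uLam.val with hLamdef
    set Laminv : X →L[ℂ] X := (uLam⁻¹).val with hLaminvdef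
    have hLamLam : ∀ x, Lam (Laminv x) = x := by
      intro x
      have h : (Lam ∘L Laminv) = 1 := by
        rw [hLamdef, hLaminvdef]; exact uLam.mul_inv
      calc Lam (Laminv x) = (Lam ∘L Laminv) x := rfl
        _ = x := by rw [h]; rfl
    have hLamLam' : ∀ x, Laminv (Lam x) = x := by
      intro x
      have h : (Laminv ∘L Lam) = 1 := by
        rw [hLamdef, hLaminvdef]; exact uLam.inv_mul
      calc Laminv (Lam x) = (Laminv ∘L Lam) x := rfl
        _ = x := by rw [h]; rfl
    have hLamp : ∀ x, Lam x = x - tT x := by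
      intro x
      rw [hLamdef, Units.val_oneSub]; rfl
    have hLaminvnorm : ‖Laminv‖ ≤ (1 - dT * ‖P1‖)⁻¹ := by
      refine le_trans (inv_norm_le_oneSub tT htTlt) ?_
      apply inv_anti₀
      · linarith
      · linarith
    have hLamT' : ∀ x ∈ T', Lam x = P1 x := by
      intro x hx
      rw [hLamp]
      have h1 : tT x = x - P1 x := by
        simp only [htTdef, ContinuousLinearMap.comp_apply, ContinuousLinearMap.sub_apply,
          ContinuousLinearMap.one_apply, projCLM_eq_self T' hT' hx]
      rw [h1]
      abel
    have hP1Lam : ∀ x, P1 (Lam x) = P1 x := by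
      intro x
      rw [hLamp, map_sub]
      have h1 : P1 (tT x) = 0 := by
        have h2 : ∀ z, P1 (z - P1 z) = 0 := by
          intro z
          rw [map_sub]
          have := DFunLike.congr_fun hP1idem z
          simp only [ContinuousLinearMap.comp_apply] at this
          rw [this, sub_self]
        simp only [htTdef, ContinuousLinearMap.comp_apply, ContinuousLinearMap.sub_apply,
          ContinuousLinearMap.one_apply]
        exact h2 _
      rw [h1, sub_zero]
    have hP1Laminv : ∀ x, P1 (Laminv x) = P1 x := by
      intro x
      conv_rhs => rw [← hLamLam x, hP1Lam]
    set G' : Y →L[ℂ] X := Laminv ∘L G1 with hG'def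
    have hG'p : ∀ y, G' y = Laminv (G1 y) := fun y => rfl
    have hG'outer : ∀ y, G' (A (G' y)) = G' y := by
      intro y
      have h1 : G1 (A (Laminv (G1 y))) = G1 (A (G1 y)) := by
        have := hP1Laminv (G1 y)
        simpa [hP1p] using this
      simp only [hG'p, h1, hG1outer]
    have hkerG' : ∀ y, G' y = 0 ↔ y ∈ S' := by
      intro y
      rw [← hkerG1 y]
      constructor
      · intro h
        have h2 : G1 y = Lam (Laminv (G1 y)) := (hLamLam _).symm
        rw [hG'p] at h
        rw [h2, h, map_zero]
      · intro h
        rw [hG'p, h, map_zero]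
    have hLaminvT : ∀ t ∈ T, Laminv t ∈ T' := by
      intro t ht
      have hsurj : ∀ w ∈ T, ∃ v ∈ T, (P1 ∘L projCLM T' hT') v = w := by
        refine surj_on_submodule _ T hT (fun w _ => hP1mem _) (mul_nonneg hdT0 (norm_nonneg _)) hdTP1 ?_
        intro w hw
        have h1 : (P1 ∘L projCLM T' hT') w - w = P1 (projCLM T' hT' w - w) := by
          rw [map_sub, hP1fix w hw]
          rfl
        rw [h1]
        calc ‖P1 (projCLM T' hT' w - w)‖ ≤ ‖P1‖ * ‖projCLM T' hT' w - w‖ :=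
              P1.le_opNorm _
          _ = ‖P1‖ * ‖w - projCLM T' hT' w‖ := by rw [norm_sub_rev]
          _ ≤ ‖P1‖ * (gapDelta (T : Set X) (T' : Set X) * ‖w‖) :=
              mul_le_mul_of_nonneg_left (norm_sub_projCLM_le_gapDelta T T' hT' hw)
                (norm_nonneg _)
          _ ≤ ‖P1‖ * (dT * ‖w‖) := by
              refine mul_le_mul_of_nonneg_left ?_ (norm_nonneg _)
              exact mul_le_mul_of_nonneg_right (le_max_left _ _) (norm_nonneg _)
          _ = dT * ‖P1‖ * ‖w‖ := by ring
      obtain ⟨v, hvT, hfv⟩ := hsurj t ht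
      have ht' : projCLM T' hT' v ∈ T' := projCLM_mem _ _ _
      have hLt : Lam (projCLM T' hT' v) = t := by
        rw [hLamT' _ ht']
        exact hfv
      rw [← hLt, hLamLam']
      exact ht'
    have hranG' : ∀ x, (∃ y, G' y = x) ↔ x ∈ T' := by
      intro x
      constructor
      · rintro ⟨y, rfl⟩
        rw [hG'p]
        exact hLaminvT _ ((hranG1 (G1 y)).mp ⟨y, rfl⟩)
      · intro hx
        have h1 : Lam x ∈ T := by
          rw [hLamT' x hx]
          exact hP1mem x
        obtain ⟨y, hy⟩ := (hranG1 (Lam x)).mpr h1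
        exact ⟨y, by rw [hG'p, hy, hLamLam']⟩
    have hG'norm : ‖G'‖ ≤ ‖G‖ * (1 - dT * (‖A‖ * ‖G‖) - dS * (‖A‖ * ‖G‖))⁻¹ := by
      have h1 : ‖G'‖ ≤ ‖Laminv‖ * ‖G1‖ := opNorm_comp_le _ _
      have h2 : ‖Laminv‖ * ‖G1‖
          ≤ (1 - dT * ((‖A‖ * ‖G‖) * (1 - dS * (‖A‖ * ‖G‖))⁻¹))⁻¹
            * (‖G‖ * (1 - dS * (‖A‖ * ‖G‖))⁻¹) := by
        refine mul_le_mul ?_ hG1norm (norm_nonneg _) (inv_nonneg.mpr (by linarith [num3 n2 hdTc0 h1S]))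
        refine le_trans hLaminvnorm ?_
        apply inv_anti₀
        · linarith [num3 n2 hdTc0 h1S, hdTP1']
        · linarith [hdTP1']
      exact le_trans h1 (le_trans h2 (num_G'bound (norm_nonneg G) h1S hDTS))
    -- the Neumann series inverse of 1 + E G' and 1 + G' E
    have hEG'norm : ‖E ∘L G'‖ ≤ (‖G‖ * ‖E‖) * (1 - dT * (‖A‖ * ‖G‖) - dS * (‖A‖ * ‖G‖))⁻¹ := by
      calc ‖E ∘L G'‖ ≤ ‖E‖ * ‖G'‖ := opNorm_comp_le _ _
        _ ≤ ‖E‖ * (‖G‖ * (1 - dT * (‖A‖ * ‖G‖) - dS * (‖A‖ * ‖G‖))⁻¹) :=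
            mul_le_mul_of_nonneg_left hG'norm he0
        _ = (‖G‖ * ‖E‖) * (1 - dT * (‖A‖ * ‖G‖) - dS * (‖A‖ * ‖G‖))⁻¹ := by ring
    have hG'Enorm : ‖G' ∘L E‖ ≤ (‖G‖ * ‖E‖) * (1 - dT * (‖A‖ * ‖G‖) - dS * (‖A‖ * ‖G‖))⁻¹ := by
      calc ‖G' ∘L E‖ ≤ ‖G'‖ * ‖E‖ := opNorm_comp_le _ _
        _ ≤ (‖G‖ * (1 - dT * (‖A‖ * ‖G‖) - dS * (‖A‖ * ‖G‖))⁻¹) * ‖E‖ :=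
            mul_le_mul_of_nonneg_right hG'norm he0
        _ = (‖G‖ * ‖E‖) * (1 - dT * (‖A‖ * ‖G‖) - dS * (‖A‖ * ‖G‖))⁻¹ := by ring
    have n3' : ‖G‖ * ‖E‖ + dT * (‖A‖ * ‖G‖) + dS * (‖A‖ * ‖G‖) < 1 := by
      have h : (‖A‖ * ‖G‖) * (dT + dS) = dT * (‖A‖ * ‖G‖) + dS * (‖A‖ * ‖G‖) := by ring
      linarith [n3, h.ge, h.le]
    have hgeDlt : (‖G‖ * ‖E‖) * (1 - dT * (‖A‖ * ‖G‖) - dS * (‖A‖ * ‖G‖))⁻¹ < 1 :=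
      numC1 n3' hDTS
    have htElt : ‖-(E ∘L G')‖ < 1 := by
      rw [norm_neg]
      exact lt_of_le_of_lt hEG'norm hgeDlt
    have htE'lt : ‖-(G' ∘L E)‖ < 1 := by
      rw [norm_neg]
      exact lt_of_le_of_lt hG'Enorm hgeDlt
    set uN := Units.oneSub (-(E ∘L G')) htElt with huNdef
    set uN' := Units.oneSub (-(G' ∘L E)) htE'lt with huN'def
    set NE : Y →L[ℂ] Y := (uN⁻¹).val with hNEdef
    set NE' : X →L[ℂ] X := (uN'⁻¹).val with hNE'def
    have hM2p : ∀ y, (uN.val) y = y + E (G' y) := by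
      intro y
      rw [huNdef, Units.val_oneSub]
      simp [ContinuousLinearMap.sub_apply, ContinuousLinearMap.comp_apply]
    have hM1p : ∀ x, (uN'.val) x = x + G' (E x) := by
      intro x
      rw [huN'def, Units.val_oneSub]
      simp [ContinuousLinearMap.sub_apply, ContinuousLinearMap.comp_apply]
    have hNEmul : ∀ y, uN.val (NE y) = y := by
      intro y
      have h : (uN.val ∘L NE) = 1 := by
        rw [hNEdef]; exact uN.mul_inv
      calc uN.val (NE y) = (uN.val ∘L NE) y := rfl
        _ = y := by rw [h]; rfl
    have hNEmul' : ∀ y, NE (uN.val y) = y := by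
      intro y
      have h : (NE ∘L uN.val) = 1 := by
        rw [hNEdef]; exact uN.inv_mul
      calc NE (uN.val y) = (NE ∘L uN.val) y := rfl
        _ = y := by rw [h]; rfl
    have hNE'mul' : ∀ x, NE' (uN'.val x) = x := by
      intro x
      have h : (NE' ∘L uN'.val) = 1 := by
        rw [hNE'def]; exact uN'.inv_mul
      calc NE' (uN'.val x) = (NE' ∘L uN'.val) x := rfl
        _ = x := by rw [h]; rfl
    -- the intertwining identity NE' G' = G' NE
    have hcomm : ∀ y, NE' (G' y) = G' (NE y) := by
      intro y
      have h1 : G' y = uN'.val (G' (NE y)) := by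
        conv_lhs => rw [← hNEmul y, hM2p]
        rw [hM1p, map_add]
      rw [h1, hNE'mul']
    set B : Y →L[ℂ] X := G' ∘L NE with hBdef
    have hBp : ∀ y, B y = G' (NE y) := fun y => rfl
    have hkerB : ∀ y, B y = 0 ↔ y ∈ S' := by
      intro y
      constructor
      · intro h
        rw [hBp] at h
        have h1 : y = NE y + E (G' (NE y)) := by
          conv_lhs => rw [← hNEmul y, hM2p]
        rw [h, map_zero, add_zero] at h1
        rw [h1]
        exact (hkerG' _).mp h
      · intro hy
        have h1 : G' y = 0 := (hkerG' y).mpr hy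
        have h2 : uN.val y = y := by rw [hM2p, h1, map_zero, add_zero]
        have h3 : NE y = y := by
          conv_lhs => rw [← h2, hNEmul']
        rw [hBp, h3, h1]
    have hranB : ∀ x, (∃ y, B y = x) ↔ x ∈ T' := by
      intro x
      constructor
      · rintro ⟨y, rfl⟩
        exact (hranG' (B y)).mp ⟨NE y, rfl⟩
      · intro hx
        obtain ⟨z, hz⟩ := (hranG' x).mpr hx
        exact ⟨uN.val z, by rw [hBp, hNEmul', hz]⟩
    have houterB : ∀ y, B ((A + E) (B y)) = B y := by
      intro y
      have hEG'z : ∀ z, E (G' z) = uN.val z - z := by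
        intro z
        rw [hM2p]
        abel
      have h1 : (A + E) (B y) = A (G' (NE y)) + E (G' (NE y)) := by
        rw [hBp]
        rfl
      have h2 : NE ((A + E) (B y)) = NE (A (G' (NE y))) + NE y - NE (NE y) := by
        rw [h1, map_add, hEG'z (NE y), map_sub, hNEmul']
        abel
      have h3 : G' (NE (A (G' (NE y)))) = G' (NE (NE y)) := by
        rw [← hcomm, hG'outer, hcomm]
      rw [hBp ((A + E) (B y)), h2, map_sub, map_add, h3, hBp]
      abel
    have hNEnorm : ‖NE‖ ≤ (1 - (‖G‖ * ‖E‖) * (1 - dT * (‖A‖ * ‖G‖) - dS * (‖A‖ * ‖G‖))⁻¹)⁻¹ := by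
      refine le_trans (inv_norm_le_oneSub _ htElt) ?_
      apply inv_anti₀
      · linarith [hgeDlt]
      · have h := hEG'norm
        rw [← norm_neg (E ∘L G')] at h
        linarith
    have hBnorm : ‖B‖ ≤ ‖G‖ * (1 - (‖G‖ * ‖E‖ + dT * (‖A‖ * ‖G‖) + dS * (‖A‖ * ‖G‖)))⁻¹ := by
      have h1 : ‖B‖ ≤ ‖G'‖ * ‖NE‖ := opNorm_comp_le _ _
      have h2 : ‖G'‖ * ‖NE‖ ≤ (‖G‖ * (1 - dT * (‖A‖ * ‖G‖) - dS * (‖A‖ * ‖G‖))⁻¹)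
          * (1 - (‖G‖ * ‖E‖) * (1 - dT * (‖A‖ * ‖G‖) - dS * (‖A‖ * ‖G‖))⁻¹)⁻¹ := by
        refine mul_le_mul hG'norm hNEnorm (norm_nonneg _) ?_
        exact mul_nonneg (norm_nonneg G) (inv_nonneg.mpr hDTS.le)
      refine le_trans h1 (le_trans h2 ?_)
      exact numC2 (norm_nonneg G) hDTS n3'
    -- B is nonzero (since T' ≠ 0)
    have hBne : B ≠ 0 := by
      intro hc
      obtain ⟨y0, hy0⟩ : ∃ y, G y ≠ 0 := by
        by_contra hcc
        push_neg at hcc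
        exact hG0 (by ext y; simp [hcc y])
      have ht0 : G y0 ∈ T := by rw [← hranG]; exact ⟨y0, rfl⟩
      have hn0 : (0:ℝ) < ‖G y0‖ := norm_pos_iff.mpr hy0
      set u := ((‖G y0‖ : ℂ)⁻¹) • G y0 with hu
      have hu1 : ‖u‖ = 1 := by
        rw [hu, norm_smul, norm_inv, Complex.norm_real, Real.norm_eq_abs, abs_of_pos hn0,
          inv_mul_cancel₀ hn0.ne']
      have huT : u ∈ T := T.smul_mem _ ht0
      have hT'0 : ∀ x ∈ T', x = (0:X) := by
        intro x hx
        obtain ⟨y, hy⟩ := (hranB x).mpr hx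
        rw [← hy, hc]
        rfl
      have hPu : projCLM T' hT' u = 0 := hT'0 _ (projCLM_mem _ _ _)
      have hinf : Metric.infDist u (T' : Set X) = 1 := by
        rw [infDist_eq_norm_sub_projCLM T' hT', hPu, sub_zero, hu1]
      have h1 : (1:ℝ) ≤ gapDelta (T : Set X) (T' : Set X) := by
        have := le_gapDelta (T : Set X) T' huT hu1
        rw [hinf] at this
        exact this
      have h2 : (1:ℝ) ≤ dT := le_trans h1 (le_max_left _ _)
      linarith
    set Qb : Y →L[ℂ] Y := (A + E) ∘L B with hQbdef
    have hQbp : ∀ y, Qb y = (A + E) (B y) := fun y => rfl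
    have hQbidem : Qb ∘L Qb = Qb := by
      ext y
      simp only [ContinuousLinearMap.comp_apply, hQbp]
      rw [houterB]
    have hQbne : Qb ≠ 0 := by
      intro hcq
      apply hBne
      ext y
      have h1 := houterB y
      have h2 : (A + E) (B y) = 0 := by
        have := DFunLike.congr_fun hcq y
        simpa [hQbp] using this
      rw [h2, map_zero] at h1
      simpa using h1.symm
    have hQbnorm : ‖Qb‖ ≤ (‖A‖ + ‖E‖) * ‖B‖ := by
      calc ‖Qb‖ ≤ ‖A + E‖ * ‖B‖ := opNorm_comp_le _ _
        _ ≤ (‖A‖ + ‖E‖) * ‖B‖ := mul_le_mul_of_nonneg_right (norm_add_le A E) (norm_nonneg B)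
    have hGAfixT : ∀ t ∈ T, G (A t) = t := by
      intro t ht
      rw [← hranG] at ht
      obtain ⟨z, rfl⟩ := ht
      exact hGAGp z
    have hτ0 : 0 ≤ ‖G‖ * ‖E‖ + (1 + Real.sqrt 5) / 2 * (‖A‖ * ‖G‖) * (dT + dS) := by
      have h5 : (0:ℝ) ≤ (1 + Real.sqrt 5) / 2 := by positivity
      have := mul_nonneg (mul_nonneg h5 hc0) (by linarith : (0:ℝ) ≤ dT + dS)
      linarith
    -- the pointwise estimate
    have hpt : ∀ y, ‖B y - G y‖
        ≤ (‖G‖ * ‖E‖ + (1 + Real.sqrt 5) / 2 * (‖A‖ * ‖G‖) * (dT + dS)) * (‖B‖ * ‖y‖) := by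
      intro y
      set K := ‖B‖ * ‖y‖ with hK
      have hK0 : 0 ≤ K := by positivity
      have hBy : ‖B y‖ ≤ K := B.le_opNorm y
      have hByT' : B y ∈ T' := (hranB (B y)).mp ⟨y, rfl⟩
      have hGyT : projCLM T hT (G y) = G y := by
        refine projCLM_eq_self T hT ?_
        rw [← hranG]
        exact ⟨y, rfl⟩
      set z := B y - G y with hz
      have hq0 : z - projCLM T hT z = B y - projCLM T hT (B y) := by
        rw [hz, map_sub, hGyT]
        abel
      have hdistB : ‖B y - projCLM T hT (B y)‖ ≤ dT * K := by
        calc ‖B y - projCLM T hT (B y)‖ ≤ gapDelta (T' : Set X) (T : Set X) * ‖B y‖ :=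
              norm_sub_projCLM_le_gapDelta T' T hT hByT'
          _ ≤ dT * K := mul_le_mul (le_max_right _ _) hBy (norm_nonneg _) hdT0
      have hqb : ‖z - projCLM T hT z‖ ≤ dT * K := by rw [hq0]; exact hdistB
      have hvS' : y - (A + E) (B y) ∈ S' := by
        refine (hkerB _).mp ?_
        rw [map_sub, houterB, sub_self]
      have hident : projCLM T hT z
          = G (A (projCLM T hT (B y) - B y)) - G (E (B y)) - G (y - (A + E) (B y)) := by
        have e1 : G (A (projCLM T hT (B y))) = projCLM T hT (B y) :=
          hGAfixT _ (projCLM_mem _ _ _)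
        have e2 : (A + E) (B y) = A (B y) + E (B y) := rfl
        rw [hz, map_sub, hGyT, e2]
        simp only [map_sub, map_add, e1]
        abel
      have b1 : ‖G (A (projCLM T hT (B y) - B y))‖ ≤ dT * (‖A‖ * ‖G‖) * K := by
        calc ‖G (A (projCLM T hT (B y) - B y))‖ ≤ ‖G‖ * ‖A (projCLM T hT (B y) - B y)‖ :=
              G.le_opNorm _
          _ ≤ ‖G‖ * (‖A‖ * ‖projCLM T hT (B y) - B y‖) :=
              mul_le_mul_of_nonneg_left (A.le_opNorm _) (norm_nonneg G)
          _ = (‖A‖ * ‖G‖) * ‖B y - projCLM T hT (B y)‖ := by rw [norm_sub_rev]; ring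
          _ ≤ (‖A‖ * ‖G‖) * (dT * K) := mul_le_mul_of_nonneg_left hdistB hc0
          _ = dT * (‖A‖ * ‖G‖) * K := by ring
      have b2 : ‖G (E (B y))‖ ≤ ‖G‖ * ‖E‖ * K := by
        calc ‖G (E (B y))‖ ≤ ‖G‖ * ‖E (B y)‖ := G.le_opNorm _
          _ ≤ ‖G‖ * (‖E‖ * ‖B y‖) :=
              mul_le_mul_of_nonneg_left (E.le_opNorm _) (norm_nonneg G)
          _ ≤ ‖G‖ * (‖E‖ * K) :=
              mul_le_mul_of_nonneg_left (mul_le_mul_of_nonneg_left hBy he0) (norm_nonneg G)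
          _ = ‖G‖ * ‖E‖ * K := by ring
      have b3 : ‖G (y - (A + E) (B y))‖ ≤ dS * (‖A‖ * ‖G‖ + ‖G‖ * ‖E‖) * K := by
        set v := y - (A + E) (B y) with hv
        have hGPiv : G (projCLM S hS v) = 0 := hSmem _ (projCLM_mem _ _ _)
        have hms : G (v - projCLM S hS v) = G v - G (projCLM S hS v) :=
          map_sub G v (projCLM S hS v)
        have h1 : G v = G (v - projCLM S hS v) := by rw [hms, hGPiv, sub_zero]
        have h2 : ‖v - projCLM S hS v‖ ≤ gapDelta (S' : Set Y) (S : Set Y) * ‖v‖ :=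
          norm_sub_projCLM_le_gapDelta S' S hS hvS'
        have h3 : ‖v‖ ≤ (‖A‖ + ‖E‖) * K := by
          have h4 : v = y - Qb y := by rw [hv, hQbp]
          calc ‖v‖ = ‖y - Qb y‖ := by rw [h4]
            _ ≤ ‖Qb‖ * ‖y‖ := idem_norm_sub_le Qb hQbidem hQbne y
            _ ≤ ((‖A‖ + ‖E‖) * ‖B‖) * ‖y‖ :=
                mul_le_mul_of_nonneg_right hQbnorm (norm_nonneg y)
            _ = (‖A‖ + ‖E‖) * K := by rw [hK]; ring
        calc ‖G v‖ = ‖G (v - projCLM S hS v)‖ := by rw [← h1]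
          _ ≤ ‖G‖ * ‖v - projCLM S hS v‖ := G.le_opNorm _
          _ ≤ ‖G‖ * (gapDelta (S' : Set Y) (S : Set Y) * ‖v‖) :=
              mul_le_mul_of_nonneg_left h2 (norm_nonneg G)
          _ ≤ ‖G‖ * (dS * ((‖A‖ + ‖E‖) * K)) := by
              refine mul_le_mul_of_nonneg_left ?_ (norm_nonneg G)
              exact mul_le_mul (le_max_right _ _) h3 (norm_nonneg v) hdS0
          _ = dS * (‖A‖ * ‖G‖ + ‖G‖ * ‖E‖) * K := by ring
      have hpsum : ‖projCLM T hT z‖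
          ≤ dT * (‖A‖ * ‖G‖) * K + ‖G‖ * ‖E‖ * K + dS * (‖A‖ * ‖G‖ + ‖G‖ * ‖E‖) * K := by
        rw [hident]
        have t1 := norm_sub_le (G (A (projCLM T hT (B y) - B y)) - G (E (B y)))
          (G (y - (A + E) (B y)))
        have t2 := norm_sub_le (G (A (projCLM T hT (B y) - B y))) (G (E (B y)))
        linarith [b1, b2, b3]
      have hpbound : ‖projCLM T hT z‖
          ≤ (dT * (‖A‖ * ‖G‖) + ‖G‖ * ‖E‖ + dS * (‖A‖ * ‖G‖ + ‖G‖ * ‖E‖)) * K := by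
        refine le_trans hpsum (le_of_eq ?_)
        ring
      have hpy := pythag_projCLM T hT z
      have hsq1 : ‖projCLM T hT z‖ ^ 2
          ≤ ((dT * (‖A‖ * ‖G‖) + ‖G‖ * ‖E‖ + dS * (‖A‖ * ‖G‖ + ‖G‖ * ‖E‖)) * K) ^ 2 :=
        pow_le_pow_left₀ (norm_nonneg _) hpbound 2
      have hsq2 : ‖z - projCLM T hT z‖ ^ 2 ≤ (dT * K) ^ 2 :=
        pow_le_pow_left₀ (norm_nonneg _) hqb 2
      have hgold := golden_ineq hc1 hge0 hge12 hdT0 hdS0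
      have hfin2 : ‖z‖ ^ 2
          ≤ ((‖G‖ * ‖E‖ + (1 + Real.sqrt 5) / 2 * (‖A‖ * ‖G‖) * (dT + dS)) * K) ^ 2 := by
        have hstep : ‖z‖ ^ 2
            ≤ ((dT * (‖A‖ * ‖G‖) + ‖G‖ * ‖E‖ + dS * ((‖A‖ * ‖G‖) + ‖G‖ * ‖E‖)) ^ 2
                + dT ^ 2) * K ^ 2 := by
          have he : ((dT * (‖A‖ * ‖G‖) + ‖G‖ * ‖E‖ + dS * (‖A‖ * ‖G‖ + ‖G‖ * ‖E‖)) * K) ^ 2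
              + (dT * K) ^ 2
              = ((dT * (‖A‖ * ‖G‖) + ‖G‖ * ‖E‖ + dS * ((‖A‖ * ‖G‖) + ‖G‖ * ‖E‖)) ^ 2
                + dT ^ 2) * K ^ 2 := by ring
          linarith [hpy, hsq1, hsq2, he.ge, he.le]
        calc ‖z‖ ^ 2 ≤ ((dT * (‖A‖ * ‖G‖) + ‖G‖ * ‖E‖ + dS * ((‖A‖ * ‖G‖) + ‖G‖ * ‖E‖)) ^ 2
                + dT ^ 2) * K ^ 2 := hstep
          _ ≤ ((‖G‖ * ‖E‖ + (1 + Real.sqrt 5) / 2 * (‖A‖ * ‖G‖) * (dT + dS)) ^ 2) * K ^ 2 :=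
              mul_le_mul_of_nonneg_right hgold (sq_nonneg K)
          _ = ((‖G‖ * ‖E‖ + (1 + Real.sqrt 5) / 2 * (‖A‖ * ‖G‖) * (dT + dS)) * K) ^ 2 := by
              ring
      have := sq_le_imp (mul_nonneg hτ0 hK0) hfin2
      calc ‖B y - G y‖ = ‖z‖ := by rw [hz]
        _ ≤ _ := this
    have hfinal1 : ‖B - G‖
        ≤ (‖G‖ * ‖E‖ + (1 + Real.sqrt 5) / 2 * (‖A‖ * ‖G‖) * (dT + dS)) * ‖B‖ := by
      refine ContinuousLinearMap.opNorm_le_bound _ (mul_nonneg hτ0 (norm_nonneg B)) fun y => ?_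
      calc ‖(B - G) y‖ = ‖B y - G y‖ := by rw [ContinuousLinearMap.sub_apply]
        _ ≤ (‖G‖ * ‖E‖ + (1 + Real.sqrt 5) / 2 * (‖A‖ * ‖G‖) * (dT + dS)) * (‖B‖ * ‖y‖) :=
            hpt y
        _ = ((‖G‖ * ‖E‖ + (1 + Real.sqrt 5) / 2 * (‖A‖ * ‖G‖) * (dT + dS)) * ‖B‖) * ‖y‖ := by
            ring
    refine ⟨B, ⟨?_, ?_, ?_⟩, ?_⟩
    · ext y
      simp only [ContinuousLinearMap.comp_apply]
      exact houterB y
    · apply le_antisymm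
      · rintro x ⟨y, rfl⟩
        exact (hranB _).mp ⟨y, rfl⟩
      · intro x hx
        obtain ⟨y, hy⟩ := (hranB x).mpr hx
        exact ⟨y, hy⟩
    · apply le_antisymm
      · intro y hy
        exact (hkerB y).mp hy
      · intro y hy
        exact (hkerB y).mpr hy
    · calc ‖B - G‖
          ≤ (‖G‖ * ‖E‖ + (1 + Real.sqrt 5) / 2 * (‖A‖ * ‖G‖) * (dT + dS)) * ‖B‖ := hfinal1
        _ ≤ (‖G‖ * ‖E‖ + (1 + Real.sqrt 5) / 2 * (‖A‖ * ‖G‖) * (dT + dS))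
            * (‖G‖ * (1 - (‖G‖ * ‖E‖ + dT * (‖A‖ * ‖G‖) + dS * (‖A‖ * ‖G‖)))⁻¹) :=
            mul_le_mul_of_nonneg_left hBnorm hτ0
        _ = ‖G‖ ^ 2 * (‖E‖ + (1 + Real.sqrt 5) / 2 * ‖A‖ * (dT + dS))
            / (1 - ‖G‖ * (‖E‖ + ‖A‖ * (dT + dS))) := final_eq
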